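/- Let (Ω, F, P) be a probability space and let Θ : Ω → Ω be a measurable transformation which preserves P. A random variable X ∈ L²(Ω, F, P) satisfies X ∘ Θ = X almost surely if and only if E[X · (Y ∘ Θ)] = E[X · Y] for all Y ∈ L²(Ω, F, P). -/

import Mathlib

open MeasureTheory ProbabilityTheory

private lemma l2_mul_integrable {Ω : Type*} [MeasurableSpace Ω] {P : Measure Ω}
    {f g : Ω → ℝ} (hf : MemLp f 2 P) (hg : MemLp g 2 P) :
    Integrable (fun ω => f ω * g ω) P := by
  have h : MemLp (f • g) 1 P := hg.smul (hpqr := ⟨by simp [ENNReal.inv_two_add_inv_two]⟩) hf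
  exact memLp_one_iff_integrable.mp h

theorem invariant_iff_integral_comp_eq
    {Ω : Type*} [MeasurableSpace Ω] (P : Measure Ω) [IsProbabilityMeasure P]
    (Θ : Ω → Ω) (hΘ : MeasurePreserving Θ P P)
    (X : Ω → ℝ) (hX : MemLp X 2 P) :
    (fun ω => X (Θ ω)) =ᵐ[P] X ↔
      ∀ Y : Ω → ℝ, MemLp Y 2 P →
        ∫ ω, X ω * Y (Θ ω) ∂P = ∫ ω, X ω * Y ω ∂P := by
  have hXΘ : MemLp (fun ω => X (Θ ω)) 2 P := hX.comp_measurePreserving hΘ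
  constructor
  · intro h Y hY
    have h1 : ∫ ω, X ω * Y (Θ ω) ∂P = ∫ ω, X (Θ ω) * Y (Θ ω) ∂P := by
      refine integral_congr_ae ?_
      filter_upwards [h] with ω hω
      rw [hω]
    rw [h1]
    have hmap := integral_map (φ := Θ) hΘ.measurable.aemeasurable
      (f := fun ω => X ω * Y ω)
      (by rw [hΘ.map_eq]; exact hX.aestronglyMeasurable.mul hY.aestronglyMeasurable)
    rw [hΘ.map_eq] at hmap
    exact hmap.symm
  · intro h
    have key := h X hX
    have hsq : ∫ ω, X (Θ ω) ^ 2 ∂P = ∫ ω, X ω ^ 2 ∂P := by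
      have hmap := integral_map (φ := Θ) hΘ.measurable.aemeasurable
        (f := fun ω => X ω ^ 2)
        (by rw [hΘ.map_eq]
            exact (hX.aestronglyMeasurable.mul hX.aestronglyMeasurable).congr
              (by filter_upwards with ω; simp [Pi.mul_apply, pow_two]))
      rw [hΘ.map_eq] at hmap
      exact hmap.symm
    have hint1 : Integrable (fun ω => X (Θ ω) ^ 2) P := by
      simpa [pow_two] using l2_mul_integrable hXΘ hXΘ
    have hint2 : Integrable (fun ω => X ω * X (Θ ω)) P := l2_mul_integrable hX hXΘ
    have hint3 : Integrable (fun ω => X ω ^ 2) P := by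
      simpa [pow_two] using l2_mul_integrable hX hX
    have hzero : ∫ ω, (X (Θ ω) - X ω) ^ 2 ∂P = 0 := by
      have expand : ∀ ω, (X (Θ ω) - X ω) ^ 2
          = X (Θ ω) ^ 2 - 2 * (X ω * X (Θ ω)) + X ω ^ 2 := by intro ω; ring
      simp_rw [expand]
      rw [integral_add (by exact (hint1.sub (hint2.const_mul 2))) hint3,
        integral_sub hint1 (hint2.const_mul 2), integral_const_mul, key, hsq]
      have : ∫ ω, X ω * X ω ∂P = ∫ ω, X ω ^ 2 ∂P := by
        congr 1; funext ω; ring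
      rw [this]; ring
    have hnn : 0 ≤ᵐ[P] fun ω => (X (Θ ω) - X ω) ^ 2 :=
      Filter.Eventually.of_forall fun ω => sq_nonneg _
    have hintsq : Integrable (fun ω => (X (Θ ω) - X ω) ^ 2) P := by
      have := l2_mul_integrable (hXΘ.sub hX) (hXΘ.sub hX)
      simpa [pow_two] using this
    have := (integral_eq_zero_iff_of_nonneg_ae hnn hintsq).mp hzero
    filter_upwards [this] with ω hω
    have : X (Θ ω) - X ω = 0 := by
      have := hω
      simp only [Pi.zero_apply] at this
      exact pow_eq_zero_iff (n := 2) (by norm_num) |>.mp this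
    linarith
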